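/- Let Δ be an additive subgroup of ℂ and φ: Δ → ℂ × ℂ → ℂ a skew-symmetric ℤ-bilinear form (φ(α,β) = −φ(β,α), additive in each argument). On the space A with basis {x_α : α ∈ Δ}, the bracket [x_α, x_β] = φ(α,β) x_{α+β} defines a Lie algebra, and together with the Novikov product x_α∘x_β = β x_{α+β} it satisfies the compatibility [x_γ∘x_α, x_β] − [x_γ∘x_β, x_α] + [x_γ,x_α]∘x_β − [x_γ,x_β]∘x_α − x_γ∘[x_α,x_β] = 0. -/

import Mathlib

open Finsupp

/-- For a skew-symmetric ℤ-bilinear form φ on Δ, the bracket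
[x_α,x_β] = φ(α,β)x_{α+β} is a Lie bracket on the free space on Δ, compatible
with the Novikov product x_α∘x_β = β x_{α+β}. -/
theorem stmt_12 (Δ : AddSubgroup ℂ) (φ : Δ → Δ → ℂ)
    (hadd₁ : ∀ α α' β : Δ, φ (α + α') β = φ α β + φ α' β)
    (hadd₂ : ∀ α β β' : Δ, φ α (β + β') = φ α β + φ α β')
    (hskew : ∀ α β : Δ, φ α β = -φ β α) :
    ∃ br circ : (Δ →₀ ℂ) →ₗ[ℂ] (Δ →₀ ℂ) →ₗ[ℂ] (Δ →₀ ℂ),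
      (∀ α β : Δ, br (single α 1) (single β 1) = φ α β • single (α + β) 1) ∧
      (∀ α β : Δ, circ (single α 1) (single β 1) = (β : ℂ) • single (α + β) 1) ∧
      (∀ u, br u u = 0) ∧
      (∀ u v w, br (br u v) w + br (br v w) u + br (br w u) v = 0) ∧
      (∀ u v w,
        br (circ w u) v - br (circ w v) u + circ (br w u) v - circ (br w v) u -
          circ w (br u v) = 0) := by
  classical
  let br : (Δ →₀ ℂ) →ₗ[ℂ] (Δ →₀ ℂ) →ₗ[ℂ] (Δ →₀ ℂ) :=
    Finsupp.lsum ℂ fun α => LinearMap.toSpanSingleton ℂ _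
      (Finsupp.lsum ℂ fun β => LinearMap.toSpanSingleton ℂ _ (φ α β • single (α + β) 1))
  let circ : (Δ →₀ ℂ) →ₗ[ℂ] (Δ →₀ ℂ) →ₗ[ℂ] (Δ →₀ ℂ) :=
    Finsupp.lsum ℂ fun α => LinearMap.toSpanSingleton ℂ _
      (Finsupp.lsum ℂ fun β => LinearMap.toSpanSingleton ℂ _ ((β : ℂ) • single (α + β) 1))
  have hbr : ∀ α β : Δ, br (single α 1) (single β 1) = φ α β • single (α + β) 1 := by
    intro α β
    simp [br, Finsupp.lsum_single, LinearMap.toSpanSingleton_apply]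
  have hcirc : ∀ α β : Δ, circ (single α 1) (single β 1) = (β : ℂ) • single (α + β) 1 := by
    intro α β
    simp [circ, Finsupp.lsum_single, LinearMap.toSpanSingleton_apply]
  have hext₂ : ∀ T S : (Δ →₀ ℂ) →ₗ[ℂ] (Δ →₀ ℂ) →ₗ[ℂ] (Δ →₀ ℂ),
      (∀ α β : Δ, T (single α 1) (single β 1) = S (single α 1) (single β 1)) → T = S := by
    intro T S h
    ext α β
    simp only [LinearMap.comp_apply, Finsupp.lsingle_apply]
    rw [h α β]
  have hext₃ : ∀ T S : (Δ →₀ ℂ) →ₗ[ℂ] (Δ →₀ ℂ) →ₗ[ℂ] (Δ →₀ ℂ) →ₗ[ℂ] (Δ →₀ ℂ),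
      (∀ α β γ : Δ, T (single α 1) (single β 1) (single γ 1)
        = S (single α 1) (single β 1) (single γ 1)) → T = S := by
    intro T S h
    ext α β γ
    simp only [LinearMap.comp_apply, Finsupp.lsingle_apply]
    rw [h α β γ]
  -- skew-symmetry of the bracket
  have hskew' : ∀ u v, br u v = - br v u := by
    have h0 : br + br.flip = 0 := by
      apply hext₂
      intro α β
      simp only [LinearMap.add_apply, LinearMap.flip_apply, LinearMap.zero_apply, hbr]
      rw [hskew α β, show β + α = α + β from add_comm β α]
      simp
    intro u v
    have h := LinearMap.congr_fun (LinearMap.congr_fun h0 u) v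
    simp only [LinearMap.add_apply, LinearMap.flip_apply, LinearMap.zero_apply] at h
    exact eq_neg_of_add_eq_zero_left h
  have halt : ∀ u, br u u = 0 := by
    intro u
    have h2 : br u u + br u u = 0 := eq_neg_iff_add_eq_zero.mp (hskew' u u)
    rw [← two_smul ℂ] at h2
    exact (smul_eq_zero.mp h2).resolve_left (by norm_num)
  -- Jacobi identity
  have hJ0 : (br.compr₂ br + ((LinearMap.lflip.toLinearMap ∘ₗ br.compr₂ br).flip
      + (LinearMap.lflip.toLinearMap ∘ₗ (br.compr₂ br).flip))) = 0 := by
    apply hext₃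
    intro α β γ
    simp only [LinearMap.add_apply, LinearMap.compr₂_apply, LinearMap.flip_apply,
      LinearMap.comp_apply, LinearMap.lflip_apply, LinearEquiv.coe_coe, LinearMap.zero_apply]
    simp only [hbr, map_smul, LinearMap.smul_apply, smul_smul]
    rw [show β + γ + α = α + β + γ from by abel, show γ + α + β = α + β + γ from by abel,
      ← add_smul, ← add_smul]
    have hc : φ α β * φ (α + β) γ + (φ β γ * φ (β + γ) α + φ γ α * φ (γ + α) β) = 0 := by
      rw [hadd₁ α β γ, hadd₁ β γ α, hadd₁ γ α β, hskew β α, hskew γ α, hskew γ β]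
      ring
    rw [hc, zero_smul]
  have hJ : ∀ u v w, br (br u v) w + br (br v w) u + br (br w u) v = 0 := by
    intro u v w
    have h := LinearMap.congr_fun (LinearMap.congr_fun (LinearMap.congr_fun hJ0 u) v) w
    simp only [LinearMap.add_apply, LinearMap.compr₂_apply, LinearMap.flip_apply,
      LinearMap.comp_apply, LinearMap.lflip_apply, LinearEquiv.coe_coe, LinearMap.zero_apply] at h
    rw [← add_assoc] at h
    exact h
  -- compatibility identity
  have hC0 : ((LinearMap.lflip.toLinearMap ∘ₗ (circ.compr₂ br).flip)
        + (LinearMap.lflip.toLinearMap ∘ₗ (br.compr₂ circ).flip))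
      = ((LinearMap.lflip.toLinearMap ∘ₗ (circ.compr₂ br).flip).flip
        + ((LinearMap.lflip.toLinearMap ∘ₗ (br.compr₂ circ).flip).flip + br.compr₂ circ.flip)) := by
    apply hext₃
    intro α β γ
    simp only [LinearMap.add_apply, LinearMap.compr₂_apply, LinearMap.flip_apply,
      LinearMap.comp_apply, LinearMap.lflip_apply, LinearEquiv.coe_coe]
    simp only [hbr, hcirc, map_smul, LinearMap.smul_apply, smul_smul]
    rw [show γ + β + α = γ + α + β from by abel, show γ + (α + β) = γ + α + β from by abel,
      ← add_smul, ← add_smul, ← add_smul]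
    congr 1
    rw [hadd₁ γ α β, hadd₁ γ β α, hskew β α]
    push_cast
    ring
  have hC : ∀ u v w,
      br (circ w u) v - br (circ w v) u + circ (br w u) v - circ (br w v) u -
        circ w (br u v) = 0 := by
    intro u v w
    have h := LinearMap.congr_fun (LinearMap.congr_fun (LinearMap.congr_fun hC0 u) v) w
    simp only [LinearMap.add_apply, LinearMap.compr₂_apply, LinearMap.flip_apply,
      LinearMap.comp_apply, LinearMap.lflip_apply, LinearEquiv.coe_coe] at h
    have e : br (circ w u) v - br (circ w v) u + circ (br w u) v - circ (br w v) u -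
        circ w (br u v)
        = (br (circ w u) v + circ (br w u) v)
          - (br (circ w v) u + (circ (br w v) u + circ w (br u v))) := by abel
    rw [e, h, sub_self]
  exact ⟨br, circ, hbr, hcirc, halt, hJ, hC⟩
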